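/- arXiv:1511.01137 — 3 statements merged into one kernel-verified Lean document; each statement's English description precedes it below -/
import Mathlib

section
/- Let T be a tournament on seven distinct vertices z, u1, u2, u3, v1, v2, v3 such that ui→z for i=1,2,3, z→vi for i=1,2,3, vi→ui for i=1,2,3, and ui→vj whenever i≠j (the arcs among {u1,u2,u3} and among {v1,v2,v3} are arbitrary). Then T contains no transitive subtournament on 5 vertices; equivalently, every feedback vertex set of T has size at least 3. -/
/-- A tournament on vertex set `V`: an irreflexive relation such that for
all distinct `u, v` exactly one of `u→v` and `v→u` holds. -/
def IsTournament {V : Type*} (r : V → V → Prop) : Prop :=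
  (∀ v, ¬ r v v) ∧ ∀ u v : V, u ≠ v → (r u v ↔ ¬ r v u)

/-- The subtournament induced on `A` contains a directed cycle. -/
def HasCycleIn {V : Type*} (r : V → V → Prop) (A : Set V) : Prop :=
  ∃ (n : ℕ) (f : Fin (n + 1) → V), Function.Injective f ∧ (∀ i, f i ∈ A) ∧
    (∀ i : Fin n, r (f i.castSucc) (f i.succ)) ∧ r (f (Fin.last n)) (f 0)

/-- `S` is a feedback vertex set: the subtournament induced on the complement of `S`
contains no directed cycle. -/
def IsFVS {V : Type*} (r : V → V → Prop) (S : Set V) : Prop :=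
  ¬ HasCycleIn r Sᶜ

/-- The restriction of `r` to the vertex set `X` is a transitive relation. -/
def TransOn {V : Type*} (r : V → V → Prop) (X : Finset V) : Prop :=
  ∀ x ∈ X, ∀ y ∈ X, ∀ z ∈ X, r x y → r y z → r x z

/-- a tournament on seven distinct vertices `z, u1, u2, u3, v1, v2, v3`
with `ui→z`, `z→vi`, `vi→ui` and `ui→vj` for `i≠j` (remaining arcs arbitrary)
contains no transitive subtournament on 5 vertices; equivalently, every feedback
vertex set has size at least 3. -/
theorem stmt1 {V : Type*} [Fintype V] [DecidableEq V]
    (r : V → V → Prop) (hT : IsTournament r)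
    (z u1 u2 u3 v1 v2 v3 : V)
    (hcard : ({z, u1, u2, u3, v1, v2, v3} : Finset V).card = 7)
    (huniv : (Finset.univ : Finset V) = {z, u1, u2, u3, v1, v2, v3})
    (huz : r u1 z ∧ r u2 z ∧ r u3 z)
    (hzv : r z v1 ∧ r z v2 ∧ r z v3)
    (hvu : r v1 u1 ∧ r v2 u2 ∧ r v3 u3)
    (huv : r u1 v2 ∧ r u1 v3 ∧ r u2 v1 ∧ r u2 v3 ∧ r u3 v1 ∧ r u3 v2) :
    (∀ X : Finset V, X.card = 5 → ¬ TransOn r X) ∧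
    (∀ S : Finset V, IsFVS r (↑S : Set V) → 3 ≤ S.card) := by
  obtain ⟨hirr, hasym⟩ := hT
  obtain ⟨h1, h2, h3⟩ := huz
  obtain ⟨h4, h5, h6⟩ := hzv
  obtain ⟨h7, h8, h9⟩ := hvu
  obtain ⟨h10, h11, h12, h13, h14, h15⟩ := huv
  -- distinctness of the 7 vertices
  have hnd : (↑([z,u1,u2,u3,v1,v2,v3] : List V) : Multiset V).Nodup := by
    apply Multiset.toFinset_card_eq_card_iff_nodup.mp
    simpa using hcard
  rw [Multiset.coe_nodup] at hnd
  simp [List.nodup_cons] at hnd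
  obtain ⟨⟨n1,n2,n3,n4,n5,n6⟩,⟨n7,n8,n9,n10,n11⟩,⟨n12,n13,n14,n15'⟩,⟨n16,n17,n18⟩,⟨n19,n20⟩,n21⟩ := hnd
  have hucard : (Finset.univ : Finset V).card = 7 := by rw [huniv]; exact hcard
  -- Part 1
  have part1 : ∀ X : Finset V, X.card = 5 → ¬ TransOn r X := by
    intro X hX5 hTr
    have hD : ((Finset.univ : Finset V) \ X).card = 2 := by
      rw [Finset.card_sdiff_of_subset (Finset.subset_univ X)]; omega
    -- three distinct missing vertices give a contradiction
    have triple : ∀ a b c : V, a ∉ X → b ∉ X → c ∉ X → a ≠ b → a ≠ c → b ≠ c → False := by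
      intro a b c na nb nc hab hac hbc
      have hsub : ({a,b,c} : Finset V) ⊆ Finset.univ \ X := by
        intro x hx
        simp only [Finset.mem_insert, Finset.mem_singleton] at hx
        rcases hx with rfl | rfl | rfl <;> simp [na, nb, nc]
      have h3 : ({a,b,c} : Finset V).card = 3 := by
        rw [Finset.card_insert_of_notMem (by simp [hab, hac]),
            Finset.card_insert_of_notMem (by simp [hbc]), Finset.card_singleton]
      have := Finset.card_le_card hsub
      omega
    -- a full pair together with z gives a contradiction
    have pairK : ∀ u v : V, u ∈ X → v ∈ X → z ∈ X → r u z → r z v → r v u → z ≠ u → False := by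
      intro u v hu hv hz ruz rzv rvu hzu
      exact (hasym z u hzu).mp (hTr z hz v hv u hu rzv rvu) ruz
    -- two full pairs give a contradiction
    have pairs : ∀ a b c d : V, a ∈ X → b ∈ X → c ∈ X → d ∈ X →
        r a b → r b c → r c d → r d a → a ≠ c → False := by
      intro a b c d ha hb hc hd rab rbc rcd rda hac
      exact (hasym a c hac).mp (hTr a ha b hb c hc rab rbc) (hTr c hc d hd a ha rcd rda)
    -- extract a missing vertex from a broken pair
    have getm : ∀ u v : V, ¬ (u ∈ X ∧ v ∈ X) → ∃ a, (a = u ∨ a = v) ∧ a ∉ X := by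
      intro u v h
      by_cases hu : u ∈ X
      · exact ⟨v, Or.inr rfl, fun hv => h ⟨hu, hv⟩⟩
      · exact ⟨u, Or.inl rfl, hu⟩
    have d12 : ∀ a b : V, (a = u1 ∨ a = v1) → (b = u2 ∨ b = v2) → a ≠ b := by
      rintro a b (rfl | rfl) (rfl | rfl)
      · exact n7
      · exact n10
      · exact Ne.symm n13
      · exact n19
    have d13 : ∀ a b : V, (a = u1 ∨ a = v1) → (b = u3 ∨ b = v3) → a ≠ b := by
      rintro a b (rfl | rfl) (rfl | rfl)
      · exact n8
      · exact n11
      · exact Ne.symm n16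
      · exact n20
    have d23 : ∀ a b : V, (a = u2 ∨ a = v2) → (b = u3 ∨ b = v3) → a ≠ b := by
      rintro a b (rfl | rfl) (rfl | rfl)
      · exact n12
      · exact n15'
      · exact Ne.symm n17
      · exact n21
    have dz1 : ∀ a : V, (a = u1 ∨ a = v1) → z ≠ a := by rintro a (rfl | rfl); exacts [n1, n4]
    have dz2 : ∀ a : V, (a = u2 ∨ a = v2) → z ≠ a := by rintro a (rfl | rfl); exacts [n2, n5]
    have dz3 : ∀ a : V, (a = u3 ∨ a = v3) → z ≠ a := by rintro a (rfl | rfl); exacts [n3, n6]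
    by_cases hz : z ∈ X
    · by_cases p1 : u1 ∈ X ∧ v1 ∈ X
      · exact pairK u1 v1 p1.1 p1.2 hz h1 h4 h7 n1
      by_cases p2 : u2 ∈ X ∧ v2 ∈ X
      · exact pairK u2 v2 p2.1 p2.2 hz h2 h5 h8 n2
      by_cases p3 : u3 ∈ X ∧ v3 ∈ X
      · exact pairK u3 v3 p3.1 p3.2 hz h3 h6 h9 n3
      · obtain ⟨a1, e1, m1⟩ := getm u1 v1 p1
        obtain ⟨a2, e2, m2⟩ := getm u2 v2 p2
        obtain ⟨a3, e3, m3⟩ := getm u3 v3 p3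
        exact triple a1 a2 a3 m1 m2 m3 (d12 a1 a2 e1 e2) (d13 a1 a3 e1 e3) (d23 a2 a3 e2 e3)
    · by_cases p1 : u1 ∈ X ∧ v1 ∈ X
      · by_cases p2 : u2 ∈ X ∧ v2 ∈ X
        · exact pairs v1 u1 v2 u2 p1.2 p1.1 p2.2 p2.1 h7 h10 h8 h12 n19
        by_cases p3 : u3 ∈ X ∧ v3 ∈ X
        · exact pairs v1 u1 v3 u3 p1.2 p1.1 p3.2 p3.1 h7 h11 h9 h14 n20
        · obtain ⟨a2, e2, m2⟩ := getm u2 v2 p2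
          obtain ⟨a3, e3, m3⟩ := getm u3 v3 p3
          exact triple z a2 a3 hz m2 m3 (dz2 a2 e2) (dz3 a3 e3) (d23 a2 a3 e2 e3)
      · by_cases p2 : u2 ∈ X ∧ v2 ∈ X
        · by_cases p3 : u3 ∈ X ∧ v3 ∈ X
          · exact pairs v2 u2 v3 u3 p2.2 p2.1 p3.2 p3.1 h8 h13 h9 h15 n21
          · obtain ⟨a1, e1, m1⟩ := getm u1 v1 p1
            obtain ⟨a3, e3, m3⟩ := getm u3 v3 p3
            exact triple z a1 a3 hz m1 m3 (dz1 a1 e1) (dz3 a3 e3) (d13 a1 a3 e1 e3)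
        · obtain ⟨a1, e1, m1⟩ := getm u1 v1 p1
          obtain ⟨a2, e2, m2⟩ := getm u2 v2 p2
          exact triple z a1 a2 hz m1 m2 (dz1 a1 e1) (dz2 a2 e2) (d12 a1 a2 e1 e2)
  refine ⟨part1, ?_⟩
  -- Part 2
  intro S hS
  by_contra hlt
  push_neg at hlt
  have hc5 : 5 ≤ ((Finset.univ : Finset V) \ S).card := by
    rw [Finset.card_sdiff_of_subset (Finset.subset_univ S)]; omega
  obtain ⟨X, hXsub, hX5⟩ := Finset.exists_subset_card_eq hc5
  have hnt := part1 X hX5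
  unfold TransOn at hnt
  push_neg at hnt
  obtain ⟨x, hx, y, hy, w, hw, rxy, ryw, nrxw⟩ := hnt
  have hxy : x ≠ y := by rintro rfl; exact hirr x rxy
  have hyw : y ≠ w := by rintro rfl; exact hirr y ryw
  have hxw : x ≠ w := by rintro rfl; exact (hasym x y hxy).mp rxy ryw
  have rwx : r w x := by
    by_contra h
    exact nrxw ((hasym x w hxw).mpr h)
  have hxS : x ∉ S := by have := hXsub hx; simp at this; exact this
  have hyS : y ∉ S := by have := hXsub hy; simp at this; exact this
  have hwS : w ∉ S := by have := hXsub hw; simp at this; exact this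
  apply hS
  refine ⟨2, ![x, y, w], ?_, ?_, ?_, ?_⟩
  · intro i j hij
    fin_cases i <;> fin_cases j <;> simp_all
  · intro i
    fin_cases i <;> simp [hxS, hyS, hwS]
  · intro i
    fin_cases i
    · simpa using rxy
    · simpa using ryw
  · simpa using rwx
end

section
/- Let T be a tournament with vertex set V and weight function w : V → ℝ with w ≥ 0, and let x* be an optimal solution to the LP relaxation (LP) for T. Let S = {v ∈ V : x*_v ≥ 3/7}. Then OPT(T−S) + (3/7)·w(S) ≤ OPT(T), where T−S denotes the subtournament induced on V∖S. -/
/-- Feasibility for the LP relaxation (LP) of the FVS problem on the subtournament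
induced on `A`: `x ≥ 0`, every directed triangle inside `A` is covered to value at
least `1`, and every 7-element subset of `A` with no 5-element transitive subset is
covered to value at least `3`. -/
def LPFeasibleOn {V : Type*} [Fintype V] [DecidableEq V]
    (r : V → V → Prop) (A : Finset V) (x : V → ℝ) : Prop :=
  (∀ v, 0 ≤ x v) ∧
  (∀ u ∈ A, ∀ v ∈ A, ∀ w ∈ A, r u v → r v w → r w u → 1 ≤ x u + x v + x w) ∧
  (∀ Q ⊆ A, Q.card = 7 →
    (¬ ∃ X ⊆ Q, X.card = 5 ∧ TransOn r X) → 3 ≤ ∑ v ∈ Q, x v)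

/-- `OPT` of the LP relaxation on the subtournament induced on `A`. -/
noncomputable def LPoptOn {V : Type*} [Fintype V] [DecidableEq V]
    (r : V → V → Prop) (w : V → ℝ) (A : Finset V) : ℝ :=
  sInf {c : ℝ | ∃ x : V → ℝ, LPFeasibleOn r A x ∧ c = ∑ v ∈ A, w v * x v}

/-- if `x*` is an optimal solution to the LP relaxation for `T` and
`S = {v : x*_v ≥ 3/7}`, then `OPT(T−S) + (3/7)·w(S) ≤ OPT(T)`. -/
theorem stmt3 {V : Type*} [Fintype V] [DecidableEq V]
    (r : V → V → Prop) (hT : IsTournament r)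
    (w : V → ℝ) (hw : ∀ v, 0 ≤ w v)
    (xs : V → ℝ) (hfeas : LPFeasibleOn r Finset.univ xs)
    (hopt : ∑ v, w v * xs v = LPoptOn r w Finset.univ)
    (S : Finset V) (hS : (↑S : Set V) = {v : V | 3 / 7 ≤ xs v}) :
    LPoptOn r w (Finset.univ \ S) + 3 / 7 * ∑ v ∈ S, w v ≤ LPoptOn r w Finset.univ := by
  have hS' : ∀ v ∈ S, 3 / 7 ≤ xs v := by
    intro v hv
    have : v ∈ (↑S : Set V) := hv
    rw [hS] at this
    exact this
  obtain ⟨hx0, htri, h7⟩ := hfeas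
  have hfeas' : LPFeasibleOn r (Finset.univ \ S) xs := by
    refine ⟨hx0, ?_, ?_⟩
    · intro u _ v _ a _ h1 h2 h3
      exact htri u (Finset.mem_univ _) v (Finset.mem_univ _) a (Finset.mem_univ _) h1 h2 h3
    · intro Q _ hcard hX
      exact h7 Q (Finset.subset_univ _) hcard hX
  have hbdd : BddBelow {c : ℝ | ∃ x : V → ℝ,
      LPFeasibleOn r (Finset.univ \ S) x ∧ c = ∑ v ∈ Finset.univ \ S, w v * x v} := by
    refine ⟨0, ?_⟩
    rintro c ⟨x, hx, rfl⟩
    exact Finset.sum_nonneg fun v _ => mul_nonneg (hw v) (hx.1 v)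
  have h1 : LPoptOn r w (Finset.univ \ S) ≤ ∑ v ∈ Finset.univ \ S, w v * xs v :=
    csInf_le hbdd ⟨xs, hfeas', rfl⟩
  have hsplit : ∑ v ∈ Finset.univ \ S, w v * xs v + ∑ v ∈ S, w v * xs v
      = ∑ v, w v * xs v :=
    Finset.sum_sdiff (Finset.subset_univ S)
  have h2 : 3 / 7 * ∑ v ∈ S, w v ≤ ∑ v ∈ S, w v * xs v := by
    rw [Finset.mul_sum]
    refine Finset.sum_le_sum fun v hv => ?_
    calc 3 / 7 * w v = w v * (3 / 7) := by ring
      _ ≤ w v * xs v := mul_le_mul_of_nonneg_left (hS' v hv) (hw v)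
  calc LPoptOn r w (Finset.univ \ S) + 3 / 7 * ∑ v ∈ S, w v
      ≤ ∑ v ∈ Finset.univ \ S, w v * xs v + ∑ v ∈ S, w v * xs v := add_le_add h1 h2
    _ = ∑ v, w v * xs v := hsplit
    _ = LPoptOn r w Finset.univ := hopt
end

section
/- Let T be a tournament with vertex set V and weight function w : V → ℝ with w ≥ 0, such that V is nonempty, every vertex of T is contained in some directed triangle, and the triangle-covering LP of T has an optimal solution x* with x*_v ≤ 3/7 for every v ∈ V. Then the optimum value of the triangle-covering LP equals (1/3)·w(V), where w(V) = ∑_{v∈V} w_v. -/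
/-- Feasibility for the triangle-covering LP: `x ≥ 0` and every directed triangle
is covered to value at least `1`. -/
def TriLPFeasible {V : Type*} (r : V → V → Prop) (x : V → ℝ) : Prop :=
  (∀ v, 0 ≤ x v) ∧
  (∀ u v w : V, r u v → r v w → r w u → 1 ≤ x u + x v + x w)

/-- if `V` is nonempty, every vertex lies in a directed triangle, and the
triangle-covering LP has an optimal solution `x*` with `x*_v ≤ 3/7` for all `v`, then
the optimum value of the triangle-covering LP equals `(1/3)·w(V)`. -/
theorem stmt5 {V : Type*} [Fintype V] [Nonempty V]
    (r : V → V → Prop) (hT : IsTournament r)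
    (w : V → ℝ) (hw : ∀ v, 0 ≤ w v)
    (hcov : ∀ v : V, ∃ u u' : V, r v u ∧ r u u' ∧ r u' v)
    (xs : V → ℝ) (hfeas : TriLPFeasible r xs)
    (hopt : ∀ x : V → ℝ, TriLPFeasible r x → ∑ v, w v * xs v ≤ ∑ v, w v * x v)
    (hb : ∀ v, xs v ≤ 3 / 7) :
    ∑ v, w v * xs v = 1 / 3 * ∑ v, w v := by
  -- every coordinate is at least 1/7
  have hlow : ∀ v, 1 / 7 ≤ xs v := by
    intro v
    obtain ⟨u, u', h1, h2, h3⟩ := hcov v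
    have h := hfeas.2 v u u' h1 h2 h3
    have hu := hb u; have hu' := hb u'
    linarith
  -- upper bound via the constant 1/3 solution
  have hub : ∑ v, w v * xs v ≤ 1 / 3 * ∑ v, w v := by
    have hf : TriLPFeasible r (fun _ => 1 / 3) :=
      ⟨fun v => by norm_num, fun u v w' _ _ _ => by norm_num⟩
    have h := hopt _ hf
    calc ∑ v, w v * xs v ≤ ∑ v, w v * (1 / 3) := h
      _ = 1 / 3 * ∑ v, w v := by rw [Finset.mul_sum]; exact Finset.sum_congr rfl (fun v _ => by ring)
  -- lower bound via y = (7/4) xs - 1/4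
  have hlb : 1 / 3 * ∑ v, w v ≤ ∑ v, w v * xs v := by
    have hf : TriLPFeasible r (fun v => 7 / 4 * xs v - 1 / 4) := by
      constructor
      · intro v; have := hlow v; linarith
      · intro u v w' h1 h2 h3
        have := hfeas.2 u v w' h1 h2 h3
        linarith
    have h := hopt _ hf
    have hsum : ∑ v, w v * (7 / 4 * xs v - 1 / 4)
        = 7 / 4 * (∑ v, w v * xs v) - 1 / 4 * ∑ v, w v := by
      rw [Finset.mul_sum, Finset.mul_sum, ← Finset.sum_sub_distrib]
      exact Finset.sum_congr rfl (fun v _ => by ring)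
    rw [hsum] at h
    linarith
  linarith
end
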